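/- arXiv:2212.09905 — 2 statements merged into one kernel-verified Lean document; each statement's English description precedes it below -/
import Mathlib

section
/- Fix p ∈ [0,1]. Consider the CS6V model with constant parameters b₁(i,j) ≡ 0 and b₂(i,j) ≡ 1−p, with height function H, and the discrete Hammersley process with parameter p, with height function H^d. Then the random families (H(x,y))_{(x,y) ∈ ℤ≥0²} and (H^d(x,y))_{(x,y) ∈ ℤ≥0²} have the same joint distribution. -/
open MeasureTheory Filter

/-- Generic sequential sampling of a vertex model on the first quadrant
(vertices indexed from `0`, corresponding to the paper's coordinates `(a+1, b+1)`). -/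
def outCfg (bd : Bool) (rule : ℕ → ℕ → Bool → Bool → Bool × Bool) : ℕ → ℕ → Bool × Bool
  | 0, 0 => rule 0 0 false bd
  | a + 1, 0 => rule (a + 1) 0 false (outCfg bd rule a 0).2
  | 0, b + 1 => rule 0 (b + 1) (outCfg bd rule 0 b).1 bd
  | a + 1, b + 1 => rule (a + 1) (b + 1) (outCfg bd rule (a + 1) b).1 (outCfg bd rule a (b + 1)).2
termination_by a b => a + b

/-- The sampling rule of the complemented stochastic six vertex (CS6V) model. -/
noncomputable def cs6vRule (b1 b2 u : ℕ → ℕ → ℝ) (a b : ℕ) (ib il : Bool) : Bool × Bool :=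
  match ib, il with
  | true, false => (true, false)
  | false, true => (false, true)
  | true, true => if u a b ≤ b1 a b then (true, true) else (false, false)
  | false, false => if u a b ≤ b2 a b then (false, false) else (true, true)

/-- The top output `O_t` and right output `O_r` of the vertex `(a+1, b+1)` of the CS6V model
with empty boundary data. -/
noncomputable def cs6vOut (b1 b2 u : ℕ → ℕ → ℝ) (a b : ℕ) : Bool × Bool :=
  outCfg false (cs6vRule b1 b2 u) a b

/-- The height function of the CS6V model with empty boundary data. -/
noncomputable def cs6vHeight (b1 b2 u : ℕ → ℕ → ℝ) (x y : ℕ) : ℕ :=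
  if y = 0 then 0
  else ((Finset.range x).filter (fun a => (cs6vOut b1 b2 u a (y - 1)).1 = true)).card

/-- The height function of the discrete Hammersley process with point configuration
`ξ` (where `ξ a b` indicates the presence of a point at `(a, b) ∈ ℤ≥1²`):
the maximal length of a strictly increasing chain of points of `ξ` inside `[1,x] × [1,y]`. -/
noncomputable def hamHeight (ξ : ℕ → ℕ → Bool) (x y : ℕ) : ℕ :=
  sSup {L : ℕ | ∃ c : Fin L → ℕ × ℕ,
    (∀ t, ξ (c t).1 (c t).2 = true ∧
      1 ≤ (c t).1 ∧ (c t).1 ≤ x ∧ 1 ≤ (c t).2 ∧ (c t).2 ≤ y) ∧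
    ∀ s t, s < t → (c s).1 < (c t).1 ∧ (c s).2 < (c t).2}

namespace CS6VHam

variable (p : ℝ) (u : ℕ → ℕ → ℝ)

noncomputable def O (a b : ℕ) : Bool × Bool :=
  cs6vOut (fun _ _ => 0) (fun _ _ => 1 - p) u a b

noncomputable def ibIn (a b : ℕ) : Bool := if b = 0 then false else (O p u a (b - 1)).1

noncomputable def ilIn (a b : ℕ) : Bool := if a = 0 then false else (O p u (a - 1) b).2

lemma O_eq (a b : ℕ) : O p u a b =
    cs6vRule (fun _ _ => 0) (fun _ _ => 1 - p) u a b (ibIn p u a b) (ilIn p u a b) := by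
  match a, b with
  | 0, 0 => simp [O, cs6vOut, outCfg, ibIn, ilIn]
  | a + 1, 0 => simp [O, cs6vOut, outCfg, ibIn, ilIn]
  | 0, b + 1 => simp [O, cs6vOut, outCfg, ibIn, ilIn]
  | a + 1, b + 1 => simp [O, cs6vOut, outCfg, ibIn, ilIn]

lemma conservation {a b : ℕ} (hu : 0 < u a b) :
    (O p u a b).1.toNat + (ilIn p u a b).toNat = (O p u a b).2.toNat + (ibIn p u a b).toNat := by
  rw [O_eq]
  rcases hib : ibIn p u a b <;> rcases hil : ilIn p u a b <;>
    simp only [cs6vRule] <;> (try split_ifs with h) <;> simp_all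

lemma maxid {a b : ℕ} (hu : 0 < u a b) :
    (ibIn p u a b).toNat + (O p u a b).2.toNat =
      max (max (ilIn p u a b).toNat (ibIn p u a b).toNat) (decide (1 - p < u a b)).toNat := by
  have hd : (decide (1 - p < u a b)).toNat ≤ 1 := Bool.toNat_le _
  rw [O_eq]
  rcases hib : ibIn p u a b <;> rcases hil : ilIn p u a b <;> simp only [cs6vRule]
  · split_ifs with h
    · simp [decide_eq_false (not_lt.mpr h)]
    · simp [decide_eq_true (lt_of_not_ge h)]
  · simp; omega
  · simp; omega
  · split_ifs with h
    · exact absurd h (by linarith)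
    · simp; omega

noncomputable def Hc (x y : ℕ) : ℕ := cs6vHeight (fun _ _ => 0) (fun _ _ => 1 - p) u x y

lemma Hc_zero_y (x : ℕ) : Hc p u x 0 = 0 := by simp [Hc, cs6vHeight]

lemma Hc_zero_x (y : ℕ) : Hc p u 0 y = 0 := by
  rcases y with _ | b <;> simp [Hc, cs6vHeight]

lemma filter_range_succ (P : ℕ → Prop) [DecidablePred P] (x : ℕ) :
    (Finset.filter P (Finset.range (x + 1))).card
      = (Finset.filter P (Finset.range x)).card + (if P x then 1 else 0) := by
  rw [Finset.range_add_one, Finset.filter_insert]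
  split_ifs
  · rw [Finset.card_insert_of_notMem (by simp)]
  · rfl

lemma Hc_row (x y : ℕ) : Hc p u (x + 1) y = Hc p u x y + (ibIn p u x y).toNat := by
  rcases y with _ | b
  · simp [Hc, cs6vHeight, ibIn]
  · have hO : cs6vOut (fun _ _ => 0) (fun _ _ => 1 - p) u x ((b + 1) - 1) = O p u x b := rfl
    simp only [Hc, cs6vHeight, if_neg (Nat.succ_ne_zero b), filter_range_succ, hO,
      ibIn, if_neg (Nat.succ_ne_zero b)]
    rcases h : (O p u x b).1 with _ | _ <;> simp [h]

lemma Hc_col (hu : ∀ a b, 0 < u a b) (x y : ℕ) :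
    Hc p u (x + 1) (y + 1) = Hc p u (x + 1) y + (O p u x y).2.toNat := by
  induction x with
  | zero =>
    have hcons := conservation p u (hu 0 y)
    have h1 := Hc_row p u 0 (y + 1)
    have h2 := Hc_row p u 0 y
    have hib : ibIn p u 0 (y + 1) = (O p u 0 y).1 := by simp [ibIn]
    have hil : ilIn p u 0 y = false := by simp [ilIn]
    rw [hib] at h1; rw [hil] at hcons
    rw [h1, h2, Hc_zero_x, Hc_zero_x]
    simp only [Bool.toNat_false] at hcons
    omega
  | succ x ih =>
    have hcons := conservation p u (hu (x + 1) y)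
    have h1 := Hc_row p u (x + 1) (y + 1)
    have h2 := Hc_row p u (x + 1) y
    have hib : ibIn p u (x + 1) (y + 1) = (O p u (x + 1) y).1 := by simp [ibIn]
    have hil : ilIn p u (x + 1) y = (O p u x y).2 := by simp [ilIn]
    rw [hib] at h1; rw [hil] at hcons
    omega

lemma Hc_col' (hu : ∀ a b, 0 < u a b) (x y : ℕ) :
    Hc p u x (y + 1) = Hc p u x y + (ilIn p u x y).toNat := by
  rcases x with _ | a
  · simp [Hc_zero_x, ilIn]
  · rw [Hc_col p u hu a y]
    simp [ilIn]

lemma Hc_rec (hu : ∀ a b, 0 < u a b) (x y : ℕ) :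
    Hc p u (x + 1) (y + 1) =
      max (max (Hc p u x (y + 1)) (Hc p u (x + 1) y))
        (Hc p u x y + (decide (1 - p < u x y)).toNat) := by
  have h1 := Hc_col p u hu x y
  have h2 := Hc_row p u x y
  have h3 := Hc_col' p u hu x y
  have h4 := maxid p u (hu x y)
  omega

section Ham

variable (ξ : ℕ → ℕ → Bool)

def chainSet (x y : ℕ) : Set ℕ :=
  {L : ℕ | ∃ c : Fin L → ℕ × ℕ,
    (∀ t, ξ (c t).1 (c t).2 = true ∧
      1 ≤ (c t).1 ∧ (c t).1 ≤ x ∧ 1 ≤ (c t).2 ∧ (c t).2 ≤ y) ∧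
    ∀ s t, s < t → (c s).1 < (c t).1 ∧ (c s).2 < (c t).2}

lemma hamHeight_eq (x y : ℕ) : hamHeight ξ x y = sSup (chainSet ξ x y) := rfl

lemma zero_mem_chainSet (x y : ℕ) : 0 ∈ chainSet ξ x y :=
  ⟨fun t => t.elim0, fun t => t.elim0, fun s _ _ => s.elim0⟩

lemma le_of_mem_chainSet {x y L : ℕ} (hL : L ∈ chainSet ξ x y) : L ≤ x := by
  obtain ⟨c, hc, hinc⟩ := hL
  have : Function.Injective (fun t : Fin L => (⟨(c t).1 - 1, by
      have h := hc t; omega⟩ : Fin x)) := by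
    intro s t h
    simp only [Fin.mk.injEq] at h
    have hs := (hc s).2.1; have ht := (hc t).2.1
    rcases lt_trichotomy s t with h' | h' | h'
    · have := (hinc s t h').1; omega
    · exact h'
    · have := (hinc t s h').1; omega
  simpa using Fintype.card_le_of_injective _ this

lemma bddAbove_chainSet (x y : ℕ) : BddAbove (chainSet ξ x y) :=
  ⟨x, fun _ hL => le_of_mem_chainSet ξ hL⟩

lemma hamHeight_mem (x y : ℕ) : hamHeight ξ x y ∈ chainSet ξ x y :=
  Nat.sSup_mem ⟨0, zero_mem_chainSet ξ x y⟩ (bddAbove_chainSet ξ x y)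

lemma le_hamHeight {x y L : ℕ} (hL : L ∈ chainSet ξ x y) : L ≤ hamHeight ξ x y :=
  le_csSup (bddAbove_chainSet ξ x y) hL

lemma hamHeight_le {x y n : ℕ} (h : ∀ L ∈ chainSet ξ x y, L ≤ n) : hamHeight ξ x y ≤ n :=
  csSup_le ⟨0, zero_mem_chainSet ξ x y⟩ h

lemma chainSet_mono {x y x' y' : ℕ} (hx : x ≤ x') (hy : y ≤ y') :
    chainSet ξ x y ⊆ chainSet ξ x' y' := by
  rintro L ⟨c, hc, hinc⟩
  exact ⟨c, fun t => ⟨(hc t).1, (hc t).2.1, le_trans (hc t).2.2.1 hx, (hc t).2.2.2.1,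
    le_trans (hc t).2.2.2.2 hy⟩, hinc⟩

lemma hamHeight_mono {x y x' y' : ℕ} (hx : x ≤ x') (hy : y ≤ y') :
    hamHeight ξ x y ≤ hamHeight ξ x' y' :=
  hamHeight_le ξ fun _ hL => le_hamHeight ξ (chainSet_mono ξ hx hy hL)

lemma hamHeight_zero_y (x : ℕ) : hamHeight ξ x 0 = 0 := by
  refine Nat.le_zero.mp (hamHeight_le ξ ?_)
  rintro L ⟨c, hc, -⟩
  by_contra h
  have := hc ⟨0, by omega⟩
  omega

lemma hamHeight_zero_x (y : ℕ) : hamHeight ξ 0 y = 0 := by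
  refine Nat.le_zero.mp (hamHeight_le ξ ?_)
  rintro L ⟨c, hc, -⟩
  by_contra h
  have := hc ⟨0, by omega⟩
  omega

lemma hamHeight_congr {ξ' : ℕ → ℕ → Bool} {x y : ℕ}
    (h : ∀ a b, 1 ≤ a → a ≤ x → 1 ≤ b → b ≤ y → ξ a b = ξ' a b) :
    hamHeight ξ x y = hamHeight ξ' x y := by
  rw [hamHeight_eq, hamHeight_eq]
  congr 1
  ext L
  constructor <;> rintro ⟨c, hc, hinc⟩ <;> refine ⟨c, fun t => ?_, hinc⟩
  · have ht := hc t
    exact ⟨by rw [← h _ _ ht.2.1 ht.2.2.1 ht.2.2.2.1 ht.2.2.2.2]; exact ht.1,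
      ht.2.1, ht.2.2.1, ht.2.2.2.1, ht.2.2.2.2⟩
  · have ht := hc t
    exact ⟨by rw [h _ _ ht.2.1 ht.2.2.1 ht.2.2.2.1 ht.2.2.2.2]; exact ht.1,
      ht.2.1, ht.2.2.1, ht.2.2.2.1, ht.2.2.2.2⟩

lemma hamHeight_rec (x y : ℕ) :
    hamHeight ξ (x + 1) (y + 1) =
      max (max (hamHeight ξ x (y + 1)) (hamHeight ξ (x + 1) y))
        (hamHeight ξ x y + (ξ (x + 1) (y + 1)).toNat) := by
  apply le_antisymm
  · refine hamHeight_le ξ ?_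
    rintro L ⟨c, hc, hinc⟩
    rcases L with _ | m
    · exact Nat.zero_le _
    · have hlast : ∀ t : Fin (m + 1),
          (c t).1 ≤ (c (Fin.last m)).1 ∧ (c t).2 ≤ (c (Fin.last m)).2 := by
        intro t
        rcases eq_or_lt_of_le (Fin.le_last t) with h | h
        · rw [h]; exact ⟨le_rfl, le_rfl⟩
        · exact ⟨(hinc t _ h).1.le, (hinc t _ h).2.le⟩
      by_cases h1 : (c (Fin.last m)).1 ≤ x
      · have hm : m + 1 ∈ chainSet ξ x (y + 1) :=
          ⟨c, fun t => ⟨(hc t).1, (hc t).2.1, le_trans (hlast t).1 h1, (hc t).2.2.2.1,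
            (hc t).2.2.2.2⟩, hinc⟩
        have := le_hamHeight ξ hm
        omega
      · by_cases h2 : (c (Fin.last m)).2 ≤ y
        · have hm : m + 1 ∈ chainSet ξ (x + 1) y :=
            ⟨c, fun t => ⟨(hc t).1, (hc t).2.1, (hc t).2.2.1, (hc t).2.2.2.1,
              le_trans (hlast t).2 h2⟩, hinc⟩
          have := le_hamHeight ξ hm
          omega
        · have hx1 : (c (Fin.last m)).1 = x + 1 := by have := (hc (Fin.last m)).2.2.1; omega
          have hy1 : (c (Fin.last m)).2 = y + 1 := by have := (hc (Fin.last m)).2.2.2.2; omega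
          have hxi : ξ (x + 1) (y + 1) = true := by
            have := (hc (Fin.last m)).1; rw [hx1, hy1] at this; exact this
          have hm : m ∈ chainSet ξ x y := by
            refine ⟨fun t => c t.castSucc, fun t => ?_, fun s t hst =>
              hinc s.castSucc t.castSucc (by rwa [Fin.castSucc_lt_castSucc_iff])⟩
            dsimp only
            have h1' := (hinc t.castSucc (Fin.last m) (Fin.castSucc_lt_last t)).1
            have h2' := (hinc t.castSucc (Fin.last m) (Fin.castSucc_lt_last t)).2
            have h3' := hc t.castSucc
            exact ⟨h3'.1, h3'.2.1, by omega, h3'.2.2.2.1, by omega⟩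
          have := le_hamHeight ξ hm
          rw [hxi]
          simp only [Bool.toNat_true]
          omega
  · refine max_le (max_le ?_ ?_) ?_
    · exact hamHeight_mono ξ (Nat.le_succ x) le_rfl
    · exact hamHeight_mono ξ le_rfl (Nat.le_succ y)
    · rcases hxi : ξ (x + 1) (y + 1) with _ | _
      · simpa using hamHeight_mono ξ (Nat.le_succ x) (Nat.le_succ y)
      · simp only [Bool.toNat_true]
        obtain ⟨c, hc, hinc⟩ := hamHeight_mem ξ x y
        refine le_hamHeight ξ (L := hamHeight ξ x y + 1) ?_
        refine ⟨fun t => if h : (t : ℕ) < hamHeight ξ x y then c ⟨t, h⟩ else (x + 1, y + 1),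
          fun t => ?_, fun s t hst => ?_⟩ <;> dsimp only
        · by_cases h : (t : ℕ) < hamHeight ξ x y
          · have h' := hc ⟨t, h⟩
            rw [dif_pos h]
            exact ⟨h'.1, h'.2.1, by omega, h'.2.2.2.1, by omega⟩
          · rw [dif_neg h]
            exact ⟨hxi, by omega, le_rfl, by omega, le_rfl⟩
        · have hst' : (s : ℕ) < (t : ℕ) := hst
          by_cases ht : (t : ℕ) < hamHeight ξ x y
          · have hs : (s : ℕ) < hamHeight ξ x y := lt_trans hst' ht
            rw [dif_pos ht, dif_pos hs]
            exact hinc ⟨s, hs⟩ ⟨t, ht⟩ hst'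
          · have hs : (s : ℕ) < hamHeight ξ x y := by omega
            rw [dif_neg ht, dif_pos hs]
            have h' := hc ⟨s, hs⟩
            exact ⟨by omega, by omega⟩

end Ham

lemma cs6v_eq_ham (p : ℝ) (u : ℕ → ℕ → ℝ) (hu : ∀ a b, 0 < u a b) :
    ∀ x y : ℕ, cs6vHeight (fun _ _ => 0) (fun _ _ => 1 - p) u x y
      = hamHeight (fun a b => decide (1 - p < u (a - 1) (b - 1))) x y := by
  set ξ : ℕ → ℕ → Bool := fun a b => decide (1 - p < u (a - 1) (b - 1)) with hξ
  suffices h : ∀ n x y, x + y ≤ n → Hc p u x y = hamHeight ξ x y by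
    intro x y; exact h (x + y) x y le_rfl
  intro n
  induction n with
  | zero =>
    intro x y h
    have hx : x = 0 := by omega
    subst hx
    rw [Hc_zero_x, hamHeight_zero_x]
  | succ n ih =>
    intro x y h
    rcases x with _ | a
    · rw [Hc_zero_x, hamHeight_zero_x]
    · rcases y with _ | b
      · rw [Hc_zero_y, hamHeight_zero_y]
      · rw [Hc_rec p u hu a b, hamHeight_rec, ih a (b + 1) (by omega), ih (a + 1) b (by omega),
          ih a b (by omega)]
        congr 2

end CS6VHam

section Meas

open ProbabilityTheory

lemma measurable_finite_deps {ι : Type*} (s : Finset ι)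
    (f : (ι → Bool) → ℕ)
    (h : ∀ B B' : ι → Bool, (∀ i ∈ s, B i = B' i) → f B = f B') :
    Measurable f := by
  classical
  have hf : f = (fun q : (∀ _ : s, Bool) =>
      f (fun i => if hi : i ∈ s then q ⟨i, hi⟩ else false)) ∘ (fun B (i : s) => B i) := by
    funext B
    exact h B _ (fun i hi => by simp [hi])
  rw [hf]
  refine Measurable.comp ?_ (measurable_pi_lambda _ fun i => measurable_pi_apply _)
  exact fun t _ => (Set.toFinite _).measurableSet

lemma measurable_hamT : Measurable (fun (B : ℕ × ℕ → Bool) (q : ℕ × ℕ) =>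
    hamHeight (fun a b => B (a - 1, b - 1)) q.1 q.2) := by
  refine measurable_pi_lambda _ fun q => ?_
  refine measurable_finite_deps ((Finset.range q.1) ×ˢ (Finset.range q.2)) _ ?_
  intro B B' h
  refine CS6VHam.hamHeight_congr _ (fun a b h1 h2 h3 h4 => ?_)
  exact h _ (by simp [Finset.mem_product]; omega)

lemma measurable_decide_le (c : ℝ) : Measurable fun r : ℝ => decide (r ≤ c) := by
  refine measurable_to_countable' fun b => ?_
  cases b
  · convert measurableSet_Ioi (a := c) using 1
    ext r; simp
  · convert measurableSet_Iic (a := c) using 1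
    ext r; simp

lemma measurable_decide_lt (c : ℝ) : Measurable fun r : ℝ => decide (c < r) := by
  refine measurable_to_countable' fun b => ?_
  cases b
  · convert measurableSet_Iic (a := c) using 1
    ext r; simp
  · convert measurableSet_Ioi (a := c) using 1
    ext r; simp

lemma unif_Iic {c : ℝ} (h0 : 0 ≤ c) (h1 : c ≤ 1) :
    (volume.restrict (Set.Icc (0 : ℝ) 1)) (Set.Iic c) = ENNReal.ofReal c := by
  rw [Measure.restrict_apply measurableSet_Iic]
  have hs : Set.Iic c ∩ Set.Icc 0 1 = Set.Icc 0 c := by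
    ext r
    simp only [Set.mem_inter_iff, Set.mem_Iic, Set.mem_Icc]
    constructor
    · rintro ⟨h, h', _⟩; exact ⟨h', h⟩
    · rintro ⟨h, h'⟩; exact ⟨h', h, le_trans h' h1⟩
  rw [hs, Real.volume_Icc]
  norm_num

lemma unif_Ioi {c : ℝ} (h0 : 0 ≤ c) (h1 : c ≤ 1) :
    (volume.restrict (Set.Icc (0 : ℝ) 1)) (Set.Ioi c) = ENNReal.ofReal (1 - c) := by
  rw [Measure.restrict_apply measurableSet_Ioi]
  have hs : Set.Ioi c ∩ Set.Icc 0 1 = Set.Ioc c 1 := by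
    ext r
    simp only [Set.mem_inter_iff, Set.mem_Ioi, Set.mem_Icc, Set.mem_Ioc]
    constructor
    · rintro ⟨h, _, h''⟩; exact ⟨h, h''⟩
    · rintro ⟨h, h'⟩; exact ⟨h, le_trans h0 h.le, h'⟩
  rw [hs, Real.volume_Ioc]

lemma cylinder_measure_eq {Θ : Type*} [MeasurableSpace Θ] (m : Measure Θ)
    (J : Finset (ℕ × ℕ)) (S : Set ({ x // x ∈ J } → Bool))
    (Z : ℕ × ℕ → Θ → Bool) (hZ : ∀ q, Measurable (Z q))
    (hZind : ∀ (J' : Finset (ℕ × ℕ)) (π : ℕ × ℕ → Bool),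
      m (⋂ i ∈ J', {θ | Z i θ = π i}) = ∏ i ∈ J', m {θ | Z i θ = π i}) :
    m ((fun θ q => Z q θ) ⁻¹' MeasureTheory.cylinder J S) =
      ∑ π ∈ S.toFinite.toFinset, ∏ i ∈ J,
        m {θ | Z i θ = (fun i' => if h : i' ∈ J then π ⟨i', h⟩ else false) i} := by
  classical
  have hF : Measurable (fun θ (i : J) => Z i.1 θ) :=
    measurable_pi_lambda _ fun i => hZ i.1
  have hpre : (fun θ q => Z q θ) ⁻¹' MeasureTheory.cylinder J S
      = (fun θ (i : J) => Z i.1 θ) ⁻¹' S := rfl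
  rw [hpre]
  have hdecomp : (fun θ (i : J) => Z i.1 θ) ⁻¹' S
      = ⋃ π ∈ S.toFinite.toFinset, (fun θ (i : J) => Z i.1 θ) ⁻¹' {π} := by
    ext θ
    simp only [Set.mem_preimage, Set.mem_iUnion, Set.Finite.mem_toFinset,
      Set.mem_singleton_iff, exists_prop]
    constructor
    · intro h; exact ⟨_, h, rfl⟩
    · rintro ⟨π, hπ, h⟩; rwa [h]
  rw [hdecomp, measure_biUnion_finset ?_ ?_]
  · refine Finset.sum_congr rfl fun π hπ => ?_
    have hsingle : (fun θ (i : J) => Z i.1 θ) ⁻¹' {π}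
        = ⋂ i ∈ J, {θ | Z i θ = (fun i' => if h : i' ∈ J then π ⟨i', h⟩ else false) i} := by
      ext θ
      simp only [Set.mem_preimage, Set.mem_singleton_iff, funext_iff, Set.mem_iInter,
        Set.mem_setOf_eq]
      constructor
      · intro h i hi; rw [dif_pos hi]; exact h ⟨i, hi⟩
      · intro h i; have := h i.1 i.2; rwa [dif_pos i.2] at this
    rw [hsingle, hZind]
  · intro a _ b _ hab
    simp only [Function.onFun]
    rw [Set.disjoint_left]
    intro θ h1 h2
    simp only [Set.mem_preimage, Set.mem_singleton_iff] at h1 h2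
    exact hab (h1 ▸ h2)
  · exact fun π _ => hF (measurableSet_singleton π)

lemma bernoulli_law_eq
    {Ω Ω' : Type*} [MeasurableSpace Ω] [MeasurableSpace Ω']
    (μ : Measure Ω) (μ' : Measure Ω') [IsProbabilityMeasure μ] [IsProbabilityMeasure μ']
    (X : ℕ × ℕ → Ω → Bool) (Y : ℕ × ℕ → Ω' → Bool)
    (hX : ∀ q, Measurable (X q)) (hY : ∀ q, Measurable (Y q))
    (hXind : ∀ (J : Finset (ℕ × ℕ)) (π : ℕ × ℕ → Bool),
      μ (⋂ i ∈ J, {ω | X i ω = π i}) = ∏ i ∈ J, μ {ω | X i ω = π i})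
    (hYind : ∀ (J : Finset (ℕ × ℕ)) (π : ℕ × ℕ → Bool),
      μ' (⋂ i ∈ J, {ω | Y i ω = π i}) = ∏ i ∈ J, μ' {ω | Y i ω = π i})
    (hmarg : ∀ q b, μ {ω | X q ω = b} = μ' {ω | Y q ω = b}) :
    Measure.map (fun ω q => X q ω) μ = Measure.map (fun ω' q => Y q ω') μ' := by
  classical
  have hXm : Measurable (fun ω q => X q ω) := measurable_pi_lambda _ hX
  have hYm : Measurable (fun ω' q => Y q ω') := measurable_pi_lambda _ hY
  refine MeasureTheory.ext_of_generate_finite (measurableCylinders (fun _ : ℕ × ℕ => Bool))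
    MeasureTheory.generateFrom_measurableCylinders.symm
    MeasureTheory.isPiSystem_measurableCylinders ?_ ?_
  swap
  · rw [Measure.map_apply hXm MeasurableSet.univ, Measure.map_apply hYm MeasurableSet.univ]
    simp
  intro t ht
  obtain ⟨J, S, hS, rfl⟩ := (MeasureTheory.mem_measurableCylinders t).mp ht
  rw [Measure.map_apply hXm (MeasurableSet.of_mem_measurableCylinders ht),
    Measure.map_apply hYm (MeasurableSet.of_mem_measurableCylinders ht)]
  have k1 := cylinder_measure_eq μ J S X hX hXind
  have k2 := cylinder_measure_eq μ' J S Y hY hYind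
  rw [k1, k2]
  refine Finset.sum_congr rfl fun π _ => Finset.prod_congr rfl fun i _ => hmarg i _

end Meas

/-- The CS6V model with parameters `b₁ ≡ 0`, `b₂ ≡ 1 - p` degenerates to the discrete
Hammersley process with parameter `p`: the height functions agree as processes in law. -/
theorem cs6v_eq_hammersley_in_law
    (p : ℝ) (hp : p ∈ Set.Icc (0 : ℝ) 1)
    {Ω : Type*} [MeasurableSpace Ω] (μ : Measure Ω) [IsProbabilityMeasure μ]
    (U : ℕ × ℕ → Ω → ℝ)
    (hUmeas : ∀ q, Measurable (U q))
    (hUindep : ProbabilityTheory.iIndepFun U μ)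
    (hUunif : ∀ q, Measure.map (U q) μ = volume.restrict (Set.Icc (0 : ℝ) 1))
    {Ω' : Type*} [MeasurableSpace Ω'] (μ' : Measure Ω') [IsProbabilityMeasure μ']
    (V : ℕ × ℕ → Ω' → ℝ)
    (hVmeas : ∀ q, Measurable (V q))
    (hVindep : ProbabilityTheory.iIndepFun V μ')
    (hVunif : ∀ q, Measure.map (V q) μ' = volume.restrict (Set.Icc (0 : ℝ) 1)) :
    Measure.map (fun ω => fun q : ℕ × ℕ =>
        cs6vHeight (fun _ _ => 0) (fun _ _ => 1 - p) (fun a b => U (a, b) ω) q.1 q.2) μ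
      = Measure.map (fun ω' => fun q : ℕ × ℕ =>
        hamHeight (fun a b => decide (V (a, b) ω' ≤ p)) q.1 q.2) μ' := by
  classical
  obtain ⟨hp0, hp1⟩ := hp
  have h1p0 : (0 : ℝ) ≤ 1 - p := by linarith
  have h1p1 : (1 : ℝ) - p ≤ 1 := by linarith
  have hXq : ∀ q : ℕ × ℕ, Measurable fun ω => decide (1 - p < U q ω) :=
    fun q => (measurable_decide_lt (1 - p)).comp (hUmeas q)
  have hYq : ∀ q : ℕ × ℕ, Measurable fun ω' => decide (V (q.1 + 1, q.2 + 1) ω' ≤ p) :=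
    fun q => (measurable_decide_le p).comp (hVmeas (q.1 + 1, q.2 + 1))
  have hlaw : Measure.map (fun ω (q : ℕ × ℕ) => decide (1 - p < U q ω)) μ
      = Measure.map (fun ω' (q : ℕ × ℕ) => decide (V (q.1 + 1, q.2 + 1) ω' ≤ p)) μ' := by
    refine bernoulli_law_eq μ μ'
      (fun q ω => decide (1 - p < U q ω))
      (fun q ω' => decide (V (q.1 + 1, q.2 + 1) ω' ≤ p)) hXq hYq ?_ ?_ ?_
    · intro J π
      exact hUindep.measure_inter_preimage_eq_mul
        (sets := fun i => (fun r => decide (1 - p < r)) ⁻¹' {π i}) J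
        (fun i _ => measurable_decide_lt (1 - p) (measurableSet_singleton (π i)))
    · intro J π
      have hinj : Function.Injective (fun q : ℕ × ℕ => (q.1 + 1, q.2 + 1)) := by
        intro a b h
        simp only [Prod.ext_iff, Prod.mk.injEq] at h ⊢
        omega
      have h1 : (⋂ i ∈ J, {ω' | decide (V (i.1 + 1, i.2 + 1) ω' ≤ p) = π i})
          = ⋂ j ∈ J.image (fun q : ℕ × ℕ => (q.1 + 1, q.2 + 1)),
              V j ⁻¹' ((fun r => decide (r ≤ p)) ⁻¹' {π (j.1 - 1, j.2 - 1)}) := by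
        ext ω'
        simp only [Set.mem_iInter, Set.mem_setOf_eq, Finset.mem_image, Set.mem_preimage,
          Set.mem_singleton_iff]
        constructor
        · rintro h j ⟨i, hi, rfl⟩
          have := h i hi
          simpa using this
        · intro h i hi
          have := h (i.1 + 1, i.2 + 1) ⟨i, hi, rfl⟩
          simpa using this
      rw [h1, hVindep.measure_inter_preimage_eq_mul
        (sets := fun j => (fun r => decide (r ≤ p)) ⁻¹' {π (j.1 - 1, j.2 - 1)})
        (J.image (fun q : ℕ × ℕ => (q.1 + 1, q.2 + 1)))
        (fun j _ => measurable_decide_le p (measurableSet_singleton _)),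
        Finset.prod_image (fun a _ b _ h => hinj h)]
      rfl
    · intro q b
      cases b
      · have hU : {ω | decide (1 - p < U q ω) = false} = U q ⁻¹' Set.Iic (1 - p) := by
          ext ω; simp [decide_eq_false_iff_not, not_lt, Set.mem_Iic]
        have hV : {ω' | decide (V (q.1 + 1, q.2 + 1) ω' ≤ p) = false}
            = V (q.1 + 1, q.2 + 1) ⁻¹' Set.Ioi p := by
          ext ω'; simp [decide_eq_false_iff_not, not_le, Set.mem_Ioi]
        rw [hU, hV, ← Measure.map_apply (hUmeas q) measurableSet_Iic,
          ← Measure.map_apply (hVmeas _) measurableSet_Ioi, hUunif q, hVunif _,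
          unif_Iic h1p0 h1p1, unif_Ioi hp0 hp1]
      · have hU : {ω | decide (1 - p < U q ω) = true} = U q ⁻¹' Set.Ioi (1 - p) := by
          ext ω; simp [Set.mem_Ioi]
        have hV : {ω' | decide (V (q.1 + 1, q.2 + 1) ω' ≤ p) = true}
            = V (q.1 + 1, q.2 + 1) ⁻¹' Set.Iic p := by
          ext ω'; simp [Set.mem_Iic]
        rw [hU, hV, ← Measure.map_apply (hUmeas q) measurableSet_Ioi,
          ← Measure.map_apply (hVmeas _) measurableSet_Iic, hUunif q, hVunif _,
          unif_Ioi h1p0 h1p1, unif_Iic hp0 hp1]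
        congr 1
        ring
  have hae : ∀ᵐ ω ∂μ, ∀ q : ℕ × ℕ, 0 < U q ω := by
    rw [ae_all_iff]
    intro q
    rw [ae_iff]
    have hset : {ω | ¬ 0 < U q ω} = U q ⁻¹' Set.Iic 0 := by
      ext ω; simp [not_lt, Set.mem_Iic]
    rw [hset, ← Measure.map_apply (hUmeas q) measurableSet_Iic, hUunif q,
      Measure.restrict_apply measurableSet_Iic]
    refine measure_mono_null ?_ (Real.volume_singleton (a := 0))
    rintro r ⟨h1, h2, -⟩
    exact le_antisymm h1 h2
  have hcongr : (fun ω => fun q : ℕ × ℕ =>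
        cs6vHeight (fun _ _ => 0) (fun _ _ => 1 - p) (fun a b => U (a, b) ω) q.1 q.2)
      =ᵐ[μ] ((fun (B : ℕ × ℕ → Bool) (q : ℕ × ℕ) => hamHeight (fun a b => B (a - 1, b - 1)) q.1 q.2)
          ∘ (fun ω (q : ℕ × ℕ) => decide (1 - p < U q ω))) := by
    filter_upwards [hae] with ω hω
    funext q
    exact CS6VHam.cs6v_eq_ham p (fun a b => U (a, b) ω) (fun a b => hω (a, b)) q.1 q.2
  rw [Measure.map_congr hcongr,
    ← Measure.map_map measurable_hamT (measurable_pi_lambda _ hXq), hlaw,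
    Measure.map_map measurable_hamT (measurable_pi_lambda _ hYq)]
  congr 1
  funext ω' q
  show hamHeight (fun a b => decide (V (a - 1 + 1, b - 1 + 1) ω' ≤ p)) q.1 q.2
      = hamHeight (fun a b => decide (V (a, b) ω' ≤ p)) q.1 q.2
  refine CS6VHam.hamHeight_congr _ (fun a b h1 h2 h3 h4 => ?_)
  have h5 : (a - 1 + 1, b - 1 + 1) = (a, b) := by
    simp only [Prod.mk.injEq]; omega
  show decide (V (a - 1 + 1, b - 1 + 1) ω' ≤ p) = decide (V (a, b) ω' ≤ p)
  rw [h5]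
end

section
/- Fix t ∈ (0,1) with t ≠ 1/2, and consider the four-element set S := {0, t, 1−t, 1} ⊂ ℝ. Define a⋆b := 0 if {a,b} = {t, 1−t}; a⋆b := a if a = b; and a⋆b := a·b otherwise. For x₁, …, x_n ∈ S define 𝔪𝔦𝔫(x₁,…,x_n) := 0 if both t and 1−t appear among x₁,…,x_n, and 𝔪𝔦𝔫(x₁,…,x_n) := min(x₁,…,x_n) otherwise. Then ⋆ is commutative and associative on S, and for every n ≥ 1 and x₁,…,x_n ∈ S one has 𝔪𝔦𝔫(x₁,…,x_n) = x₁ ⋆ x₂ ⋆ ⋯ ⋆ x_n. -/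
/-- The Boolean-type product on `S = {0, t, 1-t, 1}`:
`a ⋆ b = 0` if `{a, b} = {t, 1-t}`, `a ⋆ b = a` if `a = b`, and `a ⋆ b = a·b` otherwise. -/
noncomputable def tpngStar (t : ℝ) (a b : ℝ) : ℝ :=
  if (a = t ∧ b = 1 - t) ∨ (a = 1 - t ∧ b = t) then 0
  else if a = b then a
  else a * b

/-- The iterated product `x₁ ⋆ x₂ ⋆ ⋯ ⋆ x_n`. -/
noncomputable def tpngStarProd (t : ℝ) : List ℝ → ℝ
  | [] => 1
  | [a] => a
  | a :: b :: rest => tpngStar t a (tpngStarProd t (b :: rest))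

/-- The modified minimum `𝔪𝔦𝔫(x₁, …, x_n)`: it is `0` if both `t` and `1 - t` appear
among the `xᵢ`, and the usual minimum otherwise. -/
noncomputable def tpngMin (t : ℝ) {n : ℕ} (x : Fin (n + 1) → ℝ) : ℝ :=
  if (∃ i, x i = t) ∧ (∃ i, x i = 1 - t) then 0
  else Finset.univ.inf' Finset.univ_nonempty x

/-! ### Auxiliary definitions and lemmas -/

def tpngInS (t a : ℝ) : Prop := a = 0 ∨ a = t ∨ a = 1 - t ∨ a = 1

open Classical in
/-- Modified minimum of the nonempty list `a :: l`. -/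
noncomputable def tpngMM (t a : ℝ) (l : List ℝ) : ℝ :=
  if t ∈ a :: l ∧ (1 - t) ∈ a :: l then 0 else l.foldr min a

lemma tpng_mem_iff (t a : ℝ) : a ∈ ({0, t, 1 - t, 1} : Set ℝ) ↔ tpngInS t a := by
  simp [tpngInS, Set.mem_insert_iff]

lemma tpngInS_bounds {t a : ℝ} (ht0 : 0 < t) (ht1 : t < 1) (ha : tpngInS t a) :
    0 ≤ a ∧ a ≤ 1 := by
  rcases ha with rfl | rfl | rfl | rfl <;> constructor <;> linarith

lemma foldrMin_le_init (a : ℝ) (l : List ℝ) : l.foldr min a ≤ a := by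
  induction l with
  | nil => simp
  | cons b l ih => exact le_trans (min_le_right _ _) ih

lemma foldrMin_le_mem (a : ℝ) {b : ℝ} {l : List ℝ} (hb : b ∈ l) : l.foldr min a ≤ b := by
  induction l with
  | nil => simp at hb
  | cons c l ih =>
    rcases List.mem_cons.1 hb with rfl | hb
    · exact min_le_left _ _
    · exact le_trans (min_le_right _ _) (ih hb)

lemma foldrMin_choice (a : ℝ) (l : List ℝ) : l.foldr min a = a ∨ l.foldr min a ∈ l := by
  induction l with
  | nil => exact Or.inl rfl
  | cons b l ih =>
    rcases min_choice b (l.foldr min a) with h | h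
    · exact Or.inr (by rw [List.foldr_cons, h]; exact List.mem_cons_self)
    · rcases ih with h' | h'
      · exact Or.inl (by rw [List.foldr_cons, h, h'])
      · exact Or.inr (by rw [List.foldr_cons, h]; exact List.mem_cons_of_mem _ h')

lemma min_foldr (c : ℝ) : ∀ (l : List ℝ) (a : ℝ), min c (l.foldr min a) = l.foldr min (min c a) := by
  intro l
  induction l with
  | nil => intro a; rfl
  | cons d l ih =>
    intro a
    simp only [List.foldr_cons]
    rw [← ih a, min_left_comm]

lemma tpng_star_comm (t a b : ℝ) : tpngStar t a b = tpngStar t b a := by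
  unfold tpngStar
  split_ifs <;> first | rfl | tauto | (exact mul_comm a b)

lemma tpng_star_eq {t : ℝ} (ht0 : 0 < t) (ht1 : t < 1) (hthalf : t ≠ 1 / 2)
    {a b : ℝ} (ha : tpngInS t a) (hb : tpngInS t b) :
    tpngStar t a b = if (a = t ∧ b = 1 - t) ∨ (a = 1 - t ∧ b = t) then 0 else min a b := by
  unfold tpngStar
  split_ifs with h h'
  · rfl
  · rw [h', min_self]
  · -- a ≠ b, not the (t, 1-t) pair
    rcases ha with rfl | rfl | rfl | rfl <;> rcases hb with rfl | rfl | rfl | rfl <;>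
      first
        | tauto
        | (rw [min_def]; split_ifs <;> nlinarith)

lemma tpngMM_inS {t a : ℝ} {l : List ℝ} (ha : tpngInS t a) (hl : ∀ b ∈ l, tpngInS t b) :
    tpngInS t (tpngMM t a l) := by
  unfold tpngMM
  split_ifs with h
  · exact Or.inl rfl
  · rcases foldrMin_choice a l with h' | h'
    · rw [h']; exact ha
    · exact hl _ h'

lemma tpng_star_mm {t : ℝ} (ht0 : 0 < t) (ht1 : t < 1) (hthalf : t ≠ 1 / 2)
    {a b : ℝ} {l : List ℝ} (ha : tpngInS t a) (hb : tpngInS t b)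
    (hl : ∀ c ∈ l, tpngInS t c) :
    tpngStar t a (tpngMM t b l) = tpngMM t a (b :: l) := by
  have hts : t ≠ 1 - t := fun h => hthalf (by linarith)
  have hm : tpngInS t (tpngMM t b l) := tpngMM_inS hb hl
  have ha0 : 0 ≤ a := (tpngInS_bounds ht0 ht1 ha).1
  rw [tpng_star_eq ht0 ht1 hthalf ha hm]
  by_cases hbl : t ∈ b :: l ∧ (1 - t) ∈ b :: l
  · have hm0 : tpngMM t b l = 0 := if_pos hbl
    have hC : t ∈ a :: b :: l ∧ (1 - t) ∈ a :: b :: l :=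
      ⟨List.mem_cons_of_mem _ hbl.1, List.mem_cons_of_mem _ hbl.2⟩
    rw [hm0, tpngMM, if_pos hC]
    rw [if_neg (by rintro (⟨-, h⟩ | ⟨-, h⟩) <;> linarith)]
    exact min_eq_right ha0
  · have hmf : tpngMM t b l = l.foldr min b := if_neg hbl
    have hfmem : l.foldr min b = b ∨ l.foldr min b ∈ l := foldrMin_choice b l
    have hfmem' : l.foldr min b ∈ b :: l := by
      rcases hfmem with h | h
      · rw [h]; exact List.mem_cons_self
      · exact List.mem_cons_of_mem _ h
    by_cases hC : t ∈ a :: b :: l ∧ (1 - t) ∈ a :: b :: l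
    · rw [hmf, tpngMM, if_pos hC]
      -- since not both t and 1-t are in b :: l, one of them equals a
      rcases List.mem_cons.1 hC.1 with hta | htl
      · -- t = a
        have hsl : (1 - t) ∈ b :: l := by
          rcases List.mem_cons.1 hC.2 with hsa | hsl
          · exact absurd (hta.trans hsa.symm) hts
          · exact hsl
        have hfle : l.foldr min b ≤ 1 - t := by
          rcases List.mem_cons.1 hsl with h | h
          · rw [← h]; exact foldrMin_le_init _ _
          · exact foldrMin_le_mem _ h
        have hfS : tpngInS t (l.foldr min b) := by
          rcases hfmem with h | h
          · rw [h]; exact hb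
          · exact hl _ h
        have hf : l.foldr min b = 0 ∨ l.foldr min b = 1 - t := by
          rcases hfS with h | h | h | h
          · exact Or.inl h
          · exfalso
            have : t ∉ b :: l := fun htin => hbl ⟨htin, hsl⟩
            exact this (h ▸ hfmem')
          · exact Or.inr h
          · exfalso; rw [h] at hfle; linarith
        rcases hf with h | h
        · rw [h]
          rw [if_neg (by rintro (⟨-, h'⟩ | ⟨-, h'⟩) <;> linarith)]
          exact min_eq_right ha0
        · rw [h, if_pos (Or.inl ⟨hta.symm, rfl⟩)]
      · -- t ∈ b :: l, hence 1 - t = a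
        have hsnl : (1 - t) ∉ b :: l := fun hsin => hbl ⟨htl, hsin⟩
        have hsa : (1 - t) = a := by
          rcases List.mem_cons.1 hC.2 with h | h
          · exact h
          · exact absurd h hsnl
        have hfle : l.foldr min b ≤ t := by
          rcases List.mem_cons.1 htl with h | h
          · rw [← h]; exact foldrMin_le_init _ _
          · exact foldrMin_le_mem _ h
        have hfS : tpngInS t (l.foldr min b) := by
          rcases hfmem with h | h
          · rw [h]; exact hb
          · exact hl _ h
        have hf : l.foldr min b = 0 ∨ l.foldr min b = t := by
          rcases hfS with h | h | h | h
          · exact Or.inl h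
          · exact Or.inr h
          · exact absurd (h ▸ hfmem') hsnl
          · exfalso; rw [h] at hfle; linarith
        rcases hf with h | h
        · rw [h]
          rw [if_neg (by rintro (⟨-, h'⟩ | ⟨-, h'⟩) <;> linarith)]
          exact min_eq_right ha0
        · rw [h, if_pos (Or.inr ⟨hsa.symm, rfl⟩)]
    · rw [hmf, tpngMM, if_neg hC]
      rw [if_neg ?_]
      · -- min a (l.foldr min b) = (b :: l).foldr min a
        rw [List.foldr_cons, min_foldr, min_foldr, min_comm a b]
      · rintro (⟨hat, hf⟩ | ⟨hat, hf⟩)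
        · exact hC ⟨by rw [hat]; exact List.mem_cons_self,
            List.mem_cons_of_mem _ (hf ▸ hfmem')⟩
        · exact hC ⟨List.mem_cons_of_mem _ (hf ▸ hfmem'),
            by rw [hat]; exact List.mem_cons_self⟩

lemma tpng_prod_eq_mm {t : ℝ} (ht0 : 0 < t) (ht1 : t < 1) (hthalf : t ≠ 1 / 2) :
    ∀ (l : List ℝ) (a : ℝ), tpngInS t a → (∀ b ∈ l, tpngInS t b) →
      tpngStarProd t (a :: l) = tpngMM t a l := by
  have hts : t ≠ 1 - t := fun h => hthalf (by linarith)
  intro l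
  induction l with
  | nil =>
    intro a ha _
    show a = tpngMM t a []
    rw [tpngMM, if_neg]
    · rfl
    · rintro ⟨h1, h2⟩
      simp only [List.mem_singleton, List.mem_cons, List.not_mem_nil, or_false] at h1 h2
      exact hts (h1.trans h2.symm)
  | cons b l ih =>
    intro a ha hl
    have hb : tpngInS t b := hl b (List.mem_cons_self)
    have hl' : ∀ c ∈ l, tpngInS t c := fun c hc => hl c (List.mem_cons_of_mem _ hc)
    show tpngStar t a (tpngStarProd t (b :: l)) = tpngMM t a (b :: l)
    rw [ih b hb hl']
    exact tpng_star_mm ht0 ht1 hthalf ha hb hl'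

/-- On the set `S = {0, t, 1-t, 1}` (with `t ∈ (0,1)`, `t ≠ 1/2`), the Boolean-type
product `⋆` is commutative and associative, and the modified minimum `𝔪𝔦𝔫` of any
`x₁, …, x_n ∈ S` (`n ≥ 1`) equals the iterated product `x₁ ⋆ ⋯ ⋆ x_n`. -/
theorem tpng_min_eq_boolean_product
    (t : ℝ) (ht0 : 0 < t) (ht1 : t < 1) (hthalf : t ≠ 1 / 2) :
    (∀ a ∈ ({0, t, 1 - t, 1} : Set ℝ), ∀ b ∈ ({0, t, 1 - t, 1} : Set ℝ),
      tpngStar t a b = tpngStar t b a) ∧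
    (∀ a ∈ ({0, t, 1 - t, 1} : Set ℝ), ∀ b ∈ ({0, t, 1 - t, 1} : Set ℝ),
      ∀ c ∈ ({0, t, 1 - t, 1} : Set ℝ),
      tpngStar t a (tpngStar t b c) = tpngStar t (tpngStar t a b) c) ∧
    (∀ (n : ℕ) (x : Fin (n + 1) → ℝ), (∀ i, x i ∈ ({0, t, 1 - t, 1} : Set ℝ)) →
      tpngMin t x = tpngStarProd t (List.ofFn x)) := by
  refine ⟨fun a _ b _ => tpng_star_comm t a b, ?_, ?_⟩
  · -- associativity
    intro a ha b hb c hc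
    rw [tpng_mem_iff] at ha hb hc
    have hbc : tpngStar t b c = tpngStarProd t [b, c] := rfl
    have h1 : tpngStar t a (tpngStar t b c) = tpngStarProd t [a, b, c] := rfl
    have h2 : tpngStar t (tpngStar t a b) c = tpngStar t c (tpngStar t a b) :=
      tpng_star_comm t _ c
    have h3 : tpngStar t c (tpngStar t a b) = tpngStarProd t [c, a, b] := rfl
    rw [h1, h2, h3,
      tpng_prod_eq_mm ht0 ht1 hthalf [b, c] a ha (by
        intro x hx
        rcases List.mem_cons.1 hx with rfl | hx
        · exact hb
        · rcases List.mem_singleton.1 hx with rfl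
          exact hc),
      tpng_prod_eq_mm ht0 ht1 hthalf [a, b] c hc (by
        intro x hx
        rcases List.mem_cons.1 hx with rfl | hx
        · exact ha
        · rcases List.mem_singleton.1 hx with rfl
          exact hb)]
    unfold tpngMM
    have hcond : (t ∈ a :: [b, c] ∧ (1 - t) ∈ a :: [b, c]) ↔
        (t ∈ c :: [a, b] ∧ (1 - t) ∈ c :: [a, b]) := by
      simp only [List.mem_cons, List.mem_singleton, List.not_mem_nil, or_false]
      tauto
    by_cases h : t ∈ a :: [b, c] ∧ (1 - t) ∈ a :: [b, c]
    · rw [if_pos h, if_pos (hcond.1 h)]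
    · rw [if_neg h, if_neg (fun h' => h (hcond.2 h'))]
      show min b (min c a) = min a (min b c)
      rw [min_comm c a, min_left_comm]
  · -- modified min equals iterated product
    intro n x hx
    have hx' : ∀ i, tpngInS t (x i) := fun i => (tpng_mem_iff t (x i)).1 (hx i)
    have hofn : List.ofFn x = x 0 :: List.ofFn (fun i : Fin n => x i.succ) :=
      List.ofFn_succ
    rw [hofn, tpng_prod_eq_mm ht0 ht1 hthalf _ _ (hx' 0) (by
      intro b hb
      obtain ⟨i, rfl⟩ := List.mem_ofFn.1 hb
      exact hx' _)]
    unfold tpngMin tpngMM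
    have hmem : ∀ y : ℝ, (y ∈ x 0 :: List.ofFn (fun i : Fin n => x i.succ)) ↔ ∃ i, x i = y := by
      intro y
      rw [← hofn, List.mem_ofFn]
    have hcond : ((∃ i, x i = t) ∧ (∃ i, x i = 1 - t)) ↔
        (t ∈ x 0 :: List.ofFn (fun i : Fin n => x i.succ) ∧
         (1 - t) ∈ x 0 :: List.ofFn (fun i : Fin n => x i.succ)) := by
      rw [hmem, hmem]
    by_cases h : (∃ i, x i = t) ∧ (∃ i, x i = 1 - t)
    · rw [if_pos h, if_pos (hcond.1 h)]
    · rw [if_neg h, if_neg (fun h' => h (hcond.2 h'))]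
      -- Finset.inf' equals foldr min
      set l := List.ofFn (fun i : Fin n => x i.succ) with hl
      apply le_antisymm
      · rcases foldrMin_choice (x 0) l with h' | h'
        · rw [h']; exact Finset.inf'_le _ (Finset.mem_univ 0)
        · rcases (hmem _).1 (List.mem_cons_of_mem _ h') with ⟨i, hi⟩
          rw [← hi]; exact Finset.inf'_le _ (Finset.mem_univ i)
      · apply Finset.le_inf'
        intro i _
        rcases List.mem_cons.1 ((hmem (x i)).2 ⟨i, rfl⟩) with h' | h'
        · rw [h']; exact foldrMin_le_init _ _
        · exact foldrMin_le_mem _ h'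
end
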